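/- There is an absolute constant C with the following property: for all k ≥ 3, Σ_{p > k, p prime} 1/(p log p) ≤ (2 log 2 + C/log k)/log k. -/

import Mathlib

open Finset

/-- weight `w n = 1/(n (log n)^2)` -/
noncomputable def stmt7w (n : ℕ) : ℝ := 1 / ((n : ℝ) * Real.log n ^ 2)

/-- `v n = 1/(log n)^2` -/
noncomputable def stmt7v (n : ℕ) : ℝ := 1 / Real.log n ^ 2

/-- Chebyshev `θ` -/
noncomputable def stmt7θ (n : ℕ) : ℝ :=
  ∑ m ∈ Finset.range (n + 1), if m.Prime then Real.log m else 0

lemma stmt7θ_nonneg (n : ℕ) : 0 ≤ stmt7θ n := by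
  apply Finset.sum_nonneg
  intro m _
  split
  · exact Real.log_natCast_nonneg m
  · exact le_refl 0

lemma stmt7θ_succ (n : ℕ) :
    stmt7θ (n + 1) = stmt7θ n + (if (n+1).Prime then Real.log ((n:ℝ)+1) else 0) := by
  have := Finset.sum_range_succ
    (fun m => if m.Prime then Real.log m else 0) (n + 1)
  simpa [stmt7θ] using this

lemma stmt7θ_le (n : ℕ) : stmt7θ n ≤ 2 * Real.log 2 * n := by
  have h1 : stmt7θ n = Real.log (primorial n) := by
    rw [stmt7θ, ← Finset.sum_filter]
    rw [show ((primorial n : ℕ) : ℝ) =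
        ∏ p ∈ (Finset.range (n+1)).filter Nat.Prime, (p : ℝ) by
      rw [primorial]; push_cast; ring]
    rw [Real.log_prod]
    intro p hp
    have hp2 := (Finset.mem_filter.mp hp).2.two_le
    have : (2 : ℝ) ≤ (p : ℝ) := by exact_mod_cast hp2
    positivity
  rw [h1]
  have h2 : Real.log (primorial n) ≤ Real.log ((4 : ℝ) ^ n) := by
    apply Real.log_le_log
    · exact_mod_cast primorial_pos n
    · exact_mod_cast primorial_le_4_pow n
  have h3 : Real.log ((4 : ℝ) ^ n) = 2 * Real.log 2 * n := by
    rw [Real.log_pow, show (4 : ℝ) = 2 ^ 2 by norm_num, Real.log_pow]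
    push_cast; ring
  linarith

lemma stmt7w_nonneg (n : ℕ) : 0 ≤ stmt7w n := by
  unfold stmt7w; positivity

lemma stmt7v_nonneg (n : ℕ) : 0 ≤ stmt7v n := by
  unfold stmt7v; positivity

lemma stmt7_log_pos {n : ℕ} (hn : 2 ≤ n) : 0 < Real.log n := by
  apply Real.log_pos
  exact_mod_cast Nat.lt_of_lt_of_le one_lt_two hn

/-- antitonicity of `w` -/
lemma stmt7w_anti {n : ℕ} (hn : 2 ≤ n) : stmt7w (n + 1) ≤ stmt7w n := by
  unfold stmt7w
  have hl := stmt7_log_pos hn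
  have hl' := stmt7_log_pos (show 2 ≤ n + 1 by omega)
  have hn0 : (0:ℝ) < (n:ℝ) := by exact_mod_cast Nat.lt_of_lt_of_le Nat.zero_lt_two hn
  have h1 : (n:ℝ) ≤ ((n+1:ℕ):ℝ) := by exact_mod_cast Nat.le_succ n
  have h2 : Real.log (n:ℝ) ≤ Real.log ((n+1:ℕ):ℝ) := Real.log_le_log hn0 h1
  apply one_div_le_one_div_of_le (by positivity)
  nlinarith [mul_le_mul h2 h2 hl.le hl'.le, h1, hl'.le, hn0, sq_nonneg (Real.log ((n+1:ℕ):ℝ))]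

/-- `n * w n = v n` for `n ≥ 2` -/
lemma stmt7_nw {n : ℕ} (hn : 2 ≤ n) : (n : ℝ) * stmt7w n = stmt7v n := by
  unfold stmt7w stmt7v
  have h1 : (0:ℝ) < (n:ℝ) := by exact_mod_cast Nat.lt_of_lt_of_le Nat.zero_lt_two hn
  have h2 := stmt7_log_pos hn
  field_simp

/-- telescoping estimate -/
lemma stmt7_tel {M : ℕ} (hM : 2 ≤ M) :
    stmt7w (M + 1) ≤ 1 / Real.log (M:ℝ) - 1 / Real.log ((M:ℝ) + 1) := by
  have hc : ((M+1:ℕ):ℝ) = (M:ℝ)+1 := by push_cast; ring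
  have hx := stmt7_log_pos hM
  have hy' := stmt7_log_pos (show 2 ≤ M + 1 by omega)
  have hy : 0 < Real.log ((M:ℝ)+1) := by rw [← hc]; exact hy'
  have hm1 : (0:ℝ) < (M:ℝ) := by exact_mod_cast Nat.lt_of_lt_of_le Nat.zero_lt_two hM
  set x := Real.log (M:ℝ) with hxdef
  set y := Real.log ((M:ℝ)+1) with hydef
  have hxy : x ≤ y := Real.log_le_log hm1 (by linarith)
  have hgap : 1 / ((M:ℝ)+1) ≤ y - x := by
    have h5 : Real.log ((M:ℝ) / ((M:ℝ)+1)) ≤ (M:ℝ)/((M:ℝ)+1) - 1 :=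
      Real.log_le_sub_one_of_pos (by positivity)
    have h6 : Real.log ((M:ℝ) / ((M:ℝ)+1)) = x - y := by
      rw [Real.log_div (by positivity) (by positivity)]
    rw [h6] at h5
    have h7 : (M:ℝ)/((M:ℝ)+1) - 1 = -(1/((M:ℝ)+1)) := by field_simp; ring
    rw [h7] at h5
    linarith
  have hw : stmt7w (M + 1) = 1 / (((M:ℝ)+1) * y ^ 2) := by
    unfold stmt7w
    rw [hc]
  rw [hw]
  have h9 : (1:ℝ) ≤ (y - x) * ((M:ℝ)+1) := by
    rw [div_le_iff₀ (by positivity)] at hgap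
    linarith
  have key : 1 / (((M:ℝ)+1) * y ^ 2) ≤ (y - x) / (x * y) := by
    rw [div_le_div_iff₀ (by positivity) (by positivity)]
    nlinarith [sq_nonneg y, hy, hx, hxy, h9, mul_pos hx hy]
  calc 1 / (((M:ℝ)+1) * y ^ 2) ≤ (y - x) / (x * y) := key
    _ = 1 / x - 1 / y := by field_simp

/-- sum of telescoping bound -/
lemma stmt7_sum_w {a : ℕ} (ha : 3 ≤ a) (M : ℕ) :
    ∑ n ∈ Finset.Ioc (a + 1) M, stmt7w n ≤ 1 / Real.log ((a:ℝ) + 1) := by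
  have hla : 0 < Real.log ((a:ℝ)+1) := by
    have := stmt7_log_pos (show 2 ≤ a + 1 by omega)
    have hc : ((a+1:ℕ):ℝ) = (a:ℝ)+1 := by push_cast; ring
    rw [← hc]; exact this
  rcases le_or_gt M (a + 1) with h | h
  · rw [Finset.Ioc_eq_empty (by omega)]
    simp only [Finset.sum_empty]
    positivity
  · have key : ∀ M, a + 1 ≤ M →
        ∑ n ∈ Finset.Ioc (a + 1) M, stmt7w n
          ≤ 1 / Real.log ((a:ℝ)+1) - 1 / Real.log (M:ℝ) := by
      intro M hM
      induction M, hM using Nat.le_induction with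
      | base =>
        rw [Finset.Ioc_self]
        simp only [Finset.sum_empty]
        have hc : ((a+1:ℕ):ℝ) = (a:ℝ)+1 := by push_cast; ring
        rw [show ((a:ℕ)+1 : ℕ) = a + 1 from rfl, hc]
        simp
      | succ N hN ih =>
        rw [Finset.sum_Ioc_succ_top hN]
        have h2 := stmt7_tel (show 2 ≤ N by omega)
        have hc : ((N+1:ℕ):ℝ) = (N:ℝ)+1 := by push_cast; ring
        rw [hc]
        linarith
    have hlM := stmt7_log_pos (show 2 ≤ M by omega)
    have h10 : (0:ℝ) ≤ 1 / Real.log (M:ℝ) := by positivity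
    linarith [key M h.le]

/-- Abel summation inequality -/
lemma stmt7_abel {a : ℕ} (ha : 3 ≤ a) (N : ℕ) (hN : a ≤ N) :
    ∑ n ∈ Finset.Ioc a N, (if n.Prime then Real.log n else 0) * stmt7w n ≤
      stmt7θ N * stmt7w (N + 1)
      + 2 * Real.log 2 * (stmt7v (a + 1) - stmt7v (N + 1))
      + 2 * Real.log 2 * (∑ n ∈ Finset.Ioc (a + 1) (N + 1), stmt7w n) := by
  induction N, hN using Nat.le_induction with
  | base =>
    rw [Finset.Ioc_self, Finset.Ioc_self]
    simp only [Finset.sum_empty, sub_self, mul_zero, add_zero]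
    nlinarith [mul_nonneg (stmt7θ_nonneg a) (stmt7w_nonneg (a+1))]
  | succ N hN ih =>
    rw [Finset.sum_Ioc_succ_top hN,
        Finset.sum_Ioc_succ_top (show a + 1 ≤ N + 1 by omega)]
    have hθs := stmt7θ_succ N
    have hid : ((N:ℝ)+1) * (stmt7w (N+1) - stmt7w (N+1+1)) =
        stmt7v (N+1) - stmt7v (N+1+1) + stmt7w (N+1+1) := by
      have e1 : ((N + 1 : ℕ) : ℝ) * stmt7w (N+1) = stmt7v (N+1) := stmt7_nw (by omega)
      have e2 : ((N + 1 + 1 : ℕ) : ℝ) * stmt7w (N+1+1) = stmt7v (N+1+1) := stmt7_nw (by omega)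
      push_cast at e1 e2
      linear_combination e1 - e2
    have hkey : stmt7θ (N+1) * (stmt7w (N+1) - stmt7w (N+1+1)) ≤
        2 * Real.log 2 * (((N:ℝ)+1) * (stmt7w (N+1) - stmt7w (N+1+1))) := by
      rw [← mul_assoc]
      apply mul_le_mul_of_nonneg_right
      · have := stmt7θ_le (N+1); push_cast at this; linarith
      · have := stmt7w_anti (show 2 ≤ N + 1 by omega); linarith
    rw [hid] at hkey
    have goal2 : stmt7θ N * stmt7w (N+1)
        + (if (N+1).Prime then Real.log ((N:ℝ)+1) else 0) * stmt7w (N+1)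
        ≤ stmt7θ (N+1) * stmt7w (N+1+1)
          + 2 * Real.log 2 * (stmt7v (N+1) - stmt7v (N+1+1) + stmt7w (N+1+1)) := by
      have hsum : (if (N+1).Prime then Real.log ((N:ℝ)+1) else 0)
          = stmt7θ (N+1) - stmt7θ N := by rw [hθs]; ring
      rw [hsum]
      nlinarith [hkey]
    have hc : ((N+1:ℕ):ℝ) = (N:ℝ)+1 := by push_cast; ring
    rw [hc]
    linarith [ih, goal2]

/-- main finite bound -/
lemma stmt7_main {a : ℕ} (ha : 3 ≤ a) (N : ℕ) :
    ∑ n ∈ Finset.Ioc a N, (if n.Prime then Real.log n else 0) * stmt7w n ≤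
      2 * Real.log 2 * (stmt7v (a + 1) + 1 / Real.log ((a:ℝ) + 1)) := by
  have hL : (0:ℝ) ≤ 2 * Real.log 2 := by
    have := Real.log_pos (show (1:ℝ) < 2 by norm_num); linarith
  have hla : 0 < Real.log ((a:ℝ)+1) := by
    have := stmt7_log_pos (show 2 ≤ a + 1 by omega)
    have hc : ((a+1:ℕ):ℝ) = (a:ℝ)+1 := by push_cast; ring
    rw [← hc]; exact this
  have hval : (0:ℝ) ≤ stmt7v (a+1) + 1 / Real.log ((a:ℝ)+1) :=
    add_nonneg (stmt7v_nonneg _) (by positivity)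
  rcases le_or_gt N a with h | h
  · rw [Finset.Ioc_eq_empty (by omega)]
    simp only [Finset.sum_empty]
    exact mul_nonneg hL hval
  · have h1 := stmt7_abel ha N h.le
    have h2 := stmt7_sum_w ha (N + 1)
    have h3 : stmt7θ N * stmt7w (N+1) ≤ 2 * Real.log 2 * stmt7v (N+1) := by
      have e1 : ((N + 1 : ℕ) : ℝ) * stmt7w (N+1) = stmt7v (N+1) := stmt7_nw (by omega)
      have h4 := stmt7θ_le N
      have h5 := stmt7w_nonneg (N+1)
      calc stmt7θ N * stmt7w (N+1) ≤ 2 * Real.log 2 * (N:ℝ) * stmt7w (N+1) :=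
            mul_le_mul_of_nonneg_right h4 h5
        _ ≤ 2 * Real.log 2 * ((N+1:ℕ):ℝ) * stmt7w (N+1) := by
            apply mul_le_mul_of_nonneg_right _ h5
            have : (N:ℝ) ≤ ((N+1:ℕ):ℝ) := by exact_mod_cast Nat.le_succ N
            nlinarith [hL]
        _ = 2 * Real.log 2 * stmt7v (N+1) := by rw [mul_assoc, e1]
    have h6 : 2 * Real.log 2 * (∑ n ∈ Finset.Ioc (a+1) (N+1), stmt7w n)
        ≤ 2 * Real.log 2 * (1 / Real.log ((a:ℝ)+1)) :=
      mul_le_mul_of_nonneg_left h2 hL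
    nlinarith [h1, h3, h6]

theorem stmt7 :
    ∃ C : ℝ, ∀ k : ℝ, 3 ≤ k →
      (∑' p : {p : ℕ // p.Prime ∧ k < (p : ℝ)},
          1 / ((p : ℝ) * Real.log (p : ℕ)))
        ≤ (2 * Real.log 2 + C / Real.log k) / Real.log k := by
  use 2 * Real.log 2
  intro k hk
  have hk0 : (0:ℝ) < k := by linarith
  have hl2 : (0:ℝ) < Real.log 2 := Real.log_pos (by norm_num)
  have hlogk : 1 < Real.log k := by
    rw [show (1:ℝ) = Real.log (Real.exp 1) by rw [Real.log_exp]]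
    apply Real.log_lt_log (Real.exp_pos 1)
    calc Real.exp 1 < 2.7182818286 := Real.exp_one_lt_d9
      _ ≤ 3 := by norm_num
      _ ≤ k := hk
  have hlogk0 : 0 < Real.log k := by linarith
  set a := ⌊k⌋₊ with hadef
  have ha3 : 3 ≤ a := Nat.le_floor (by exact_mod_cast hk)
  have hak : (a : ℝ) ≤ k := Nat.floor_le hk0.le
  have hka : k < (a : ℝ) + 1 := Nat.lt_floor_add_one k
  have hloga : Real.log k ≤ Real.log ((a:ℝ) + 1) := Real.log_le_log hk0 hka.le
  have hla : 0 < Real.log ((a:ℝ)+1) := by linarith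
  have hRHS : 2 * Real.log 2 * (stmt7v (a+1) + 1 / Real.log ((a:ℝ)+1)) ≤
      (2 * Real.log 2 + 2 * Real.log 2 / Real.log k) / Real.log k := by
    have hv : stmt7v (a+1) ≤ 1 / Real.log k ^ 2 := by
      unfold stmt7v
      have hc : ((a+1:ℕ):ℝ) = (a:ℝ)+1 := by push_cast; ring
      rw [hc]
      apply one_div_le_one_div_of_le (by positivity)
      gcongr
    have hu : 1 / Real.log ((a:ℝ)+1) ≤ 1 / Real.log k :=
      one_div_le_one_div_of_le hlogk0 hloga
    have heq : (2 * Real.log 2 + 2 * Real.log 2 / Real.log k) / Real.log k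
        = 2 * Real.log 2 * (1 / Real.log k ^ 2 + 1 / Real.log k) := by
      field_simp
      ring
    rw [heq]
    have h12 := add_le_add hv hu
    nlinarith [hv, hu, hl2]
  have hRHS0 : (0:ℝ) ≤ (2 * Real.log 2 + 2 * Real.log 2 / Real.log k) / Real.log k := by
    positivity
  apply tsum_le_of_sum_le' hRHS0
  intro s
  set t := s.image (fun x : {p : ℕ // p.Prime ∧ k < (p : ℝ)} => x.val) with htdef
  set N := t.sup id with hNdef
  have hsub : t ⊆ Finset.Ioc a N := by
    intro n hn
    rw [htdef, Finset.mem_image] at hn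
    obtain ⟨x, hx, rfl⟩ := hn
    rw [Finset.mem_Ioc]
    constructor
    · have h13 := x.2.2
      have h14 : (a : ℝ) < (x.val : ℝ) := by linarith
      exact_mod_cast h14
    · exact Finset.le_sup (f := id) (by rw [htdef, Finset.mem_image]; exact ⟨x, hx, rfl⟩)
  have hstep1 : ∑ x ∈ s, 1 / ((x : ℝ) * Real.log (x : ℕ))
      = ∑ n ∈ t, 1 / ((n : ℝ) * Real.log n) := by
    rw [htdef]
    rw [Finset.sum_image (fun x _ y _ h => Subtype.val_injective h)]
  have hstep2 : ∑ n ∈ t, 1 / ((n : ℝ) * Real.log n)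
      ≤ ∑ n ∈ Finset.Ioc a N, (if n.Prime then Real.log n else 0) * stmt7w n := by
    have heqt : ∀ n ∈ t, 1 / ((n : ℝ) * Real.log n)
        = (if n.Prime then Real.log n else 0) * stmt7w n := by
      intro n hn
      rw [htdef, Finset.mem_image] at hn
      obtain ⟨x, hx, rfl⟩ := hn
      rw [if_pos x.2.1]
      unfold stmt7w
      have h2 : 2 ≤ x.val := x.2.1.two_le
      have hl := stmt7_log_pos h2
      have hp : (0:ℝ) < (x.val : ℝ) := by
        exact_mod_cast Nat.lt_of_lt_of_le Nat.zero_lt_two h2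
      field_simp
    rw [Finset.sum_congr rfl heqt]
    apply Finset.sum_le_sum_of_subset_of_nonneg hsub
    intro n _ _
    split
    · exact mul_nonneg (Real.log_natCast_nonneg n) (stmt7w_nonneg n)
    · simp
  calc ∑ x ∈ s, 1 / ((x : ℝ) * Real.log (x : ℕ))
      ≤ ∑ n ∈ Finset.Ioc a N, (if n.Prime then Real.log n else 0) * stmt7w n := by
        rw [hstep1]; exact hstep2
    _ ≤ 2 * Real.log 2 * (stmt7v (a + 1) + 1 / Real.log ((a:ℝ) + 1)) := stmt7_main ha3 N
    _ ≤ (2 * Real.log 2 + 2 * Real.log 2 / Real.log k) / Real.log k := hRHS
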